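/- arXiv:2406.09137 — 2 statements merged into one kernel-verified Lean document; each statement's English description precedes it below -/
import Mathlib

section
/- There exists a real constant ε₀ > 0 such that for every real ε with 0 < ε < ε₀, every simple graph G on a finite vertex set, every nontrivial cluster C of the agreement decomposition of G with parameter ε, and all vertices u, v ∈ C, it holds that (1 − 5ε)·|N(v)| ≤ |N(u)| ≤ |N(v)|/(1 − 5ε). -/
open scoped symmDiff Classical

/-- Two vertices `u, v` are in `ε`-agreement in `G` if
`|N(u) △ N(v)| < ε·max(|N(u)|, |N(v)|)`. -/
def InAgreement {V : Type*} [Fintype V] [DecidableEq V]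
    (G : SimpleGraph V) [DecidableRel G.Adj] (ε : ℝ) (u v : V) : Prop :=
  ((G.neighborFinset u ∆ G.neighborFinset v).card : ℝ) <
    ε * (max (G.neighborFinset u).card (G.neighborFinset v).card : ℕ)

/-- A vertex is `ε`-heavy if it is in `ε`-agreement with more than a
`(1 − ε)`-fraction of its neighbors. -/
noncomputable def Heavy {V : Type*} [Fintype V] [DecidableEq V]
    (G : SimpleGraph V) [DecidableRel G.Adj] (ε : ℝ) (u : V) : Prop :=
  (1 - ε) * ((G.neighborFinset u).card : ℝ) <
    (((G.neighborFinset u).filter (fun v => InAgreement G ε u v)).card : ℝ)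

/-- The graph `G̃` obtained from `G` by deleting every edge whose endpoints are
not in `ε`-agreement and then every remaining edge both of whose endpoints are
`ε`-light. -/
noncomputable def tildeGraph {V : Type*} [Fintype V] [DecidableEq V]
    (G : SimpleGraph V) [DecidableRel G.Adj] (ε : ℝ) : SimpleGraph V where
  Adj u v := G.Adj u v ∧ InAgreement G ε u v ∧ (Heavy G ε u ∨ Heavy G ε v)
  symm := by
    constructor
    intro u v ⟨h1, h2, h3⟩
    refine ⟨h1.symm, ?_, h3.symm⟩
    unfold InAgreement at h2 ⊢
    rwa [symmDiff_comm, max_comm]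
  loopless := ⟨fun u h => G.loopless.irrefl u h.1⟩

section Aux

set_option linter.unusedSectionVars false

open Finset

variable {V : Type*} [Fintype V] [DecidableEq V]
variable {G : SimpleGraph V} [DecidableRel G.Adj]

/-- degree as a real number -/
noncomputable def dgr (G : SimpleGraph V) [DecidableRel G.Adj] (u : V) : ℝ :=
  ((G.neighborFinset u).card : ℝ)

/-- symmetric difference of neighborhoods, as a real number -/
noncomputable def sdc (G : SimpleGraph V) [DecidableRel G.Adj] (u v : V) : ℝ :=
  (((G.neighborFinset u) ∆ (G.neighborFinset v)).card : ℝ)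

/-- 3ε-closeness of neighborhoods -/
noncomputable def Close (G : SimpleGraph V) [DecidableRel G.Adj] (ε : ℝ) (u v : V) : Prop :=
  sdc G u v ≤ 3 * ε * max (dgr G u) (dgr G v)

lemma dgr_nonneg (u : V) : 0 ≤ dgr G u := Nat.cast_nonneg _

lemma max_dgr_nonneg (u v : V) : 0 ≤ max (dgr G u) (dgr G v) :=
  le_max_of_le_left (dgr_nonneg u)

lemma sdc_nonneg (u v : V) : 0 ≤ sdc G u v := Nat.cast_nonneg _

lemma sdc_comm (u v : V) : sdc G u v = sdc G v u := by
  rw [sdc, sdc, symmDiff_comm]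

lemma sdc_self (u : V) : sdc G u u = 0 := by
  simp [sdc]

lemma agree_iff (ε : ℝ) (u v : V) :
    InAgreement G ε u v ↔ sdc G u v < ε * max (dgr G u) (dgr G v) := by
  unfold InAgreement sdc dgr
  rw [Nat.cast_max]

lemma agree_symm {ε : ℝ} {u v : V} (h : InAgreement G ε u v) : InAgreement G ε v u := by
  unfold InAgreement at h ⊢
  rwa [symmDiff_comm, max_comm]

lemma sdc_triangle (u w v : V) : sdc G u v ≤ sdc G u w + sdc G w v := by
  unfold sdc
  have h1 := card_le_card
    (symmDiff_triangle (G.neighborFinset u) (G.neighborFinset w) (G.neighborFinset v))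
  have h2 := card_union_le ((G.neighborFinset u) ∆ (G.neighborFinset w))
    ((G.neighborFinset w) ∆ (G.neighborFinset v))
  exact_mod_cast le_trans h1 h2

lemma dgr_le_dgr_add_sdc (u v : V) : dgr G u ≤ dgr G v + sdc G u v := by
  unfold dgr sdc
  have hsub : G.neighborFinset u ⊆ G.neighborFinset v ∪ ((G.neighborFinset u) ∆ (G.neighborFinset v)) := by
    intro a ha
    by_cases h : a ∈ G.neighborFinset v
    · exact mem_union_left _ h
    · exact mem_union_right _ (mem_symmDiff.mpr (Or.inl ⟨ha, h⟩))
  have := le_trans (card_le_card hsub) (card_union_le _ _)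
  exact_mod_cast this

lemma max_le_of_sdc {c : ℝ} (hc : 0 ≤ c) {u v : V}
    (h : sdc G u v ≤ c * max (dgr G u) (dgr G v)) :
    (1 - c) * max (dgr G u) (dgr G v) ≤ dgr G u := by
  rcases le_total (dgr G v) (dgr G u) with h' | h'
  · rw [max_eq_left h'] at h ⊢
    nlinarith [dgr_nonneg (G := G) u]
  · rw [max_eq_right h'] at h ⊢
    have h2 := dgr_le_dgr_add_sdc (G := G) v u
    rw [sdc_comm] at h2
    linarith

lemma max_le_of_sdc' {c : ℝ} (hc : 0 ≤ c) {u v : V}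
    (h : sdc G u v ≤ c * max (dgr G u) (dgr G v)) :
    (1 - c) * max (dgr G u) (dgr G v) ≤ dgr G v := by
  rw [sdc_comm, max_comm] at h
  rw [max_comm]
  exact max_le_of_sdc hc h

lemma agree_degree {ε : ℝ} (hε0 : 0 ≤ ε) (hε1 : ε ≤ 1) {u v : V}
    (h : InAgreement G ε u v) : (1 - ε) * dgr G v ≤ dgr G u := by
  have h' := ((agree_iff ε u v).mp h).le
  have f1 := max_le_of_sdc hε0 h'
  have f2 : dgr G v ≤ max (dgr G u) (dgr G v) := le_max_right _ _
  nlinarith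

lemma close_degree {ε : ℝ} (hε0 : 0 ≤ ε) (hε1 : ε ≤ 1/3) {u v : V}
    (h : Close G ε u v) : (1 - 3 * ε) * dgr G v ≤ dgr G u := by
  have hc : (0:ℝ) ≤ 3 * ε := by linarith
  have f1 := max_le_of_sdc hc h
  have f2 : dgr G v ≤ max (dgr G u) (dgr G v) := le_max_right _ _
  nlinarith

lemma close_refl {ε : ℝ} (hε0 : 0 ≤ ε) (u : V) : Close G ε u u := by
  unfold Close
  rw [sdc_self]
  exact mul_nonneg (by linarith) (max_dgr_nonneg u u)

lemma close_symm {ε : ℝ} {u v : V} (h : Close G ε u v) : Close G ε v u := by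
  unfold Close at h ⊢
  rwa [sdc_comm, max_comm]

/-- if `y` agrees with both `a` and `b`, then `a` and `b` are 3ε-close -/
lemma agree_close {ε : ℝ} (hε0 : 0 ≤ ε) (hε3 : ε ≤ 1/3) {a y b : V}
    (h1 : InAgreement G ε a y) (h2 : InAgreement G ε y b) : Close G ε a b := by
  have s1 := ((agree_iff ε a y).mp h1).le
  have s2 := ((agree_iff ε y b).mp h2).le
  have m1 : (1 - ε) * max (dgr G a) (dgr G y) ≤ dgr G a := max_le_of_sdc hε0 s1
  have m2 : (1 - ε) * max (dgr G y) (dgr G b) ≤ dgr G b := max_le_of_sdc' hε0 s2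
  have tri := sdc_triangle (G := G) a y b
  have hM : 0 ≤ max (dgr G a) (dgr G b) := max_dgr_nonneg a b
  have hda : dgr G a ≤ max (dgr G a) (dgr G b) := le_max_left _ _
  have hdb : dgr G b ≤ max (dgr G a) (dgr G b) := le_max_right _ _
  -- (1-ε) * sdc a b ≤ ε * da + ε * db ≤ 2 ε M ≤ 3 ε M (1-ε)
  have key : (1 - ε) * sdc G a b ≤ 2 * ε * max (dgr G a) (dgr G b) := by
    nlinarith [sdc_nonneg (G := G) a y, sdc_nonneg (G := G) y b,
      max_dgr_nonneg (G := G) a y, max_dgr_nonneg (G := G) y b]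
  have hpos : (0:ℝ) < 1 - ε := by linarith
  unfold Close
  nlinarith [sdc_nonneg (G := G) a b]

lemma heavy_pos {ε : ℝ} (hε0 : 0 < ε) {u : V} (h : Heavy G ε u) : 0 < dgr G u := by
  unfold Heavy at h
  have hle : (((G.neighborFinset u).filter (fun v => InAgreement G ε u v)).card : ℝ)
      ≤ dgr G u := by
    unfold dgr
    exact_mod_cast card_filter_le _ _
  rcases (dgr_nonneg (G := G) u).eq_or_lt with h' | h'
  · exfalso
    unfold dgr at h' hle
    nlinarith
  · exact h'

/-- two heavy vertices with 7ε-close neighborhoods have a common neighbor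
agreeing with both -/
lemma heavy_common {ε : ℝ} (hε0 : 0 < ε) (hε : ε < 1/21) {a b : V}
    (ha : Heavy G ε a) (hb : Heavy G ε b)
    (hsd : sdc G a b ≤ 7 * ε * max (dgr G a) (dgr G b)) :
    ∃ y, InAgreement G ε a y ∧ InAgreement G ε b y := by
  classical
  set Na := G.neighborFinset a with hNa
  set Nb := G.neighborFinset b with hNb
  set A := Na.filter (fun v => InAgreement G ε a v) with hA
  set B := Nb.filter (fun v => InAgreement G ε b v) with hB
  have hAcard : (1 - ε) * dgr G a < (A.card : ℝ) := ha
  have hBcard : (1 - ε) * dgr G b < (B.card : ℝ) := hb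
  -- card identities
  have hiu : ((Na ∩ Nb).card : ℝ) + ((Na ∪ Nb).card : ℝ) = dgr G a + dgr G b := by
    unfold dgr
    exact_mod_cast congrArg (Nat.cast (R := ℝ)) (card_inter_add_card_union Na Nb)
  have hsym : sdc G a b + ((Na ∩ Nb).card : ℝ) = ((Na ∪ Nb).card : ℝ) := by
    have e1 : (Na ∆ Nb) ∪ (Na ∩ Nb) = Na ∪ Nb := by
      have := symmDiff_sup_inf Na Nb
      simpa [sup_eq_union, inf_eq_inter] using this
    have e2 : ((Na ∆ Nb) ∪ (Na ∩ Nb)).card = (Na ∆ Nb).card + (Na ∩ Nb).card := by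
      apply card_union_of_disjoint
      simpa [inf_eq_inter] using disjoint_symmDiff_inf Na Nb
    unfold sdc
    rw [← e1, e2]
    push_cast
    ring
  have hABsub : A ∪ B ⊆ Na ∪ Nb := union_subset_union (filter_subset _ _) (filter_subset _ _)
  have hABle : ((A ∪ B).card : ℝ) ≤ ((Na ∪ Nb).card : ℝ) := by
    exact_mod_cast card_le_card hABsub
  have hABid : ((A ∩ B).card : ℝ) + ((A ∪ B).card : ℝ) = (A.card : ℝ) + (B.card : ℝ) := by
    exact_mod_cast congrArg (Nat.cast (R := ℝ)) (card_inter_add_card_union A B)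
  have hda : 0 < dgr G a := heavy_pos hε0 ha
  have hdb : 0 < dgr G b := heavy_pos hε0 hb
  have hεda : ε * dgr G a ≤ (1/21) * dgr G a :=
    mul_le_mul_of_nonneg_right hε.le (dgr_nonneg a)
  have hεdb : ε * dgr G b ≤ (1/21) * dgr G b :=
    mul_le_mul_of_nonneg_right hε.le (dgr_nonneg b)
  have hd1 : dgr G a ≤ dgr G b + sdc G a b := dgr_le_dgr_add_sdc a b
  have hd2 : dgr G b ≤ dgr G a + sdc G a b := by
    rw [sdc_comm]; exact dgr_le_dgr_add_sdc b a
  have hpos : 0 < ((A ∩ B).card : ℝ) := by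
    rcases le_total (dgr G a) (dgr G b) with h' | h'
    · rw [max_eq_right h'] at hsd
      linarith
    · rw [max_eq_left h'] at hsd
      linarith
  have hne : (A ∩ B).Nonempty := by
    rw [← card_pos]
    exact_mod_cast hpos
  obtain ⟨y, hy⟩ := hne
  rw [mem_inter] at hy
  exact ⟨y, (mem_filter.mp hy.1).2, (mem_filter.mp hy.2).2⟩

/-- transitivity of closeness through heavy endpoints -/
lemma close_trans_heavy {ε : ℝ} (hε0 : 0 < ε) (hε : ε < 1/21) {a m b : V}
    (ha : Heavy G ε a) (hb : Heavy G ε b)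
    (h1 : Close G ε a m) (h2 : Close G ε m b) : Close G ε a b := by
  have hc : (0:ℝ) ≤ 3 * ε := by linarith
  have m1 : (1 - 3*ε) * max (dgr G a) (dgr G m) ≤ dgr G a := max_le_of_sdc hc h1
  have m2 : (1 - 3*ε) * max (dgr G m) (dgr G b) ≤ dgr G b := max_le_of_sdc' hc h2
  have tri := sdc_triangle (G := G) a m b
  have hda : dgr G a ≤ max (dgr G a) (dgr G b) := le_max_left _ _
  have hdb : dgr G b ≤ max (dgr G a) (dgr G b) := le_max_right _ _
  have hM : 0 ≤ max (dgr G a) (dgr G b) := max_dgr_nonneg a b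
  have h1' : sdc G a m ≤ 3 * ε * max (dgr G a) (dgr G m) := h1
  have h2' : sdc G m b ≤ 3 * ε * max (dgr G m) (dgr G b) := h2
  have h13 : (0:ℝ) ≤ 1 - 3*ε := by linarith
  have key : (1 - 3*ε) * sdc G a b ≤ 6 * ε * max (dgr G a) (dgr G b) := by
    nlinarith [mul_le_mul_of_nonneg_left h1' h13, mul_le_mul_of_nonneg_left h2' h13,
      mul_le_mul_of_nonneg_left m1 hc, mul_le_mul_of_nonneg_left m2 hc,
      mul_le_mul_of_nonneg_left tri h13,
      mul_le_mul_of_nonneg_left hda hc, mul_le_mul_of_nonneg_left hdb hc]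
  have hsd : sdc G a b ≤ 7 * ε * max (dgr G a) (dgr G b) := by
    have hpos : (0:ℝ) < 1 - 3*ε := by linarith
    nlinarith [sdc_nonneg (G := G) a b]
  obtain ⟨y, hya, hyb⟩ := heavy_common hε0 hε ha hb hsd
  exact agree_close hε0.le (by linarith) hya (agree_symm hyb)

lemma tilde_adj_close {ε : ℝ} (hε0 : 0 ≤ ε) {u v : V}
    (h : (tildeGraph G ε).Adj u v) : Close G ε u v := by
  have h2 : InAgreement G ε u v := h.2.1
  have := ((agree_iff ε u v).mp h2).le
  unfold Close
  nlinarith [max_dgr_nonneg (G := G) u v]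

lemma heavy_reach_close {ε : ℝ} (hε0 : 0 < ε) (hε : ε < 1/21) :
    ∀ (n : ℕ) (a b : V) (w : (tildeGraph G ε).Walk a b), w.length ≤ n →
      Heavy G ε a → Heavy G ε b → Close G ε a b := by
  intro n
  induction n with
  | zero =>
    intro a b w hw ha hb
    cases w with
    | nil => exact close_refl hε0.le a
    | cons h p => simp [SimpleGraph.Walk.length_cons] at hw
  | succ n ih =>
    intro a b w hw ha hb
    cases w with
    | nil => exact close_refl hε0.le a
    | cons h p =>
      rename_i x
      by_cases hx : Heavy G ε x
      · have c1 : Close G ε a x := tilde_adj_close hε0.le h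
        have hlen : p.length ≤ n := by
          simp [SimpleGraph.Walk.length_cons] at hw; omega
        have c2 : Close G ε x b := ih x b p hlen hx hb
        exact close_trans_heavy hε0 hε ha hb c1 c2
      · cases p with
        | nil => exact absurd hb hx
        | cons h2 q =>
          rename_i y
          have c1 : Close G ε a y := agree_close hε0.le (by linarith) h.2.1 h2.2.1
          have hy : Heavy G ε y := (h2.2.2).resolve_left hx
          have hlen : q.length ≤ n := by
            simp [SimpleGraph.Walk.length_cons] at hw; omega
          have c2 : Close G ε y b := ih y b q hlen hy hb
          exact close_trans_heavy hε0 hε ha hb c1 c2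

lemma exists_heavy_near {ε : ℝ} (hε0 : 0 < ε) (hε1 : ε ≤ 1) {u x : V}
    (hux : (tildeGraph G ε).Adj u x) :
    ∃ h : V, Heavy G ε h ∧ (tildeGraph G ε).Reachable u h ∧
      (1 - ε) * dgr G h ≤ dgr G u ∧ (1 - ε) * dgr G u ≤ dgr G h := by
  by_cases hu : Heavy G ε u
  · refine ⟨u, hu, SimpleGraph.Reachable.refl u, ?_, ?_⟩ <;>
      nlinarith [dgr_nonneg (G := G) u]
  · have hx : Heavy G ε x := (hux.2.2).resolve_left hu
    refine ⟨x, hx, hux.reachable, ?_, ?_⟩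
    · exact agree_degree hε0.le hε1 hux.2.1
    · exact agree_degree hε0.le hε1 (agree_symm hux.2.1)

lemma main_lower {ε : ℝ} (hε0 : 0 < ε) (hε : ε < 1/21) {u v : V}
    (hu : ∃ x, (tildeGraph G ε).Adj u x) (hv : ∃ x, (tildeGraph G ε).Adj v x)
    (hr : (tildeGraph G ε).Reachable u v) :
    (1 - 5 * ε) * dgr G v ≤ dgr G u := by
  obtain ⟨xu, hxu⟩ := hu
  obtain ⟨xv, hxv⟩ := hv
  obtain ⟨hu', hhu, hru, hA, hA'⟩ := exists_heavy_near hε0 (by linarith) hxu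
  obtain ⟨hv', hhv, hrv, hB, hB'⟩ := exists_heavy_near hε0 (by linarith) hxv
  have hr' : (tildeGraph G ε).Reachable hu' hv' := (hru.symm.trans hr).trans hrv
  have hclose : Close G ε hu' hv' := by
    obtain ⟨w⟩ := hr'
    exact heavy_reach_close hε0 hε w.length hu' hv' w le_rfl hhu hhv
  have hmid : (1 - 3*ε) * dgr G hv' ≤ dgr G hu' :=
    close_degree hε0.le (by linarith) hclose
  have e1 : (0:ℝ) ≤ 1 - ε := by linarith
  have e2 : (0:ℝ) ≤ (1 - ε) * (1 - 3*ε) := by nlinarith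
  nlinarith [mul_le_mul_of_nonneg_left hmid e1, mul_le_mul_of_nonneg_left hB' e2,
    dgr_nonneg (G := G) v,
    mul_nonneg (mul_nonneg (dgr_nonneg (G := G) v) (sq_nonneg ε))
      (by linarith : (0:ℝ) ≤ 7 - 3*ε)]

end Aux

/-- `C` is a cluster of the agreement decomposition of `G` with parameter `ε`:
the vertex set of a connected component of `G̃`. -/
noncomputable def IsCluster {V : Type*} [Fintype V] [DecidableEq V]
    (G : SimpleGraph V) [DecidableRel G.Adj] (ε : ℝ) (C : Finset V) : Prop :=
  ∃ v : V, C = Finset.univ.filter (fun w => (tildeGraph G ε).Reachable v w)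

/-- Property 8: for every nontrivial cluster `C` of the agreement decomposition
and all `u, v ∈ C`, `(1 − 5ε)·|N(v)| ≤ |N(u)| ≤ |N(v)|/(1 − 5ε)`. -/
theorem cluster_degree_bounds :
    ∃ ε₀ : ℝ, 0 < ε₀ ∧
      ∀ (V : Type) (_ : Fintype V) (_ : DecidableEq V)
        (G : SimpleGraph V) (_ : DecidableRel G.Adj) (ε : ℝ), 0 < ε → ε < ε₀ →
        ∀ C : Finset V, IsCluster G ε C → 1 < C.card →
          ∀ u ∈ C, ∀ v ∈ C,
            (1 - 5 * ε) * ((G.neighborFinset v).card : ℝ) ≤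
                ((G.neighborFinset u).card : ℝ) ∧
              ((G.neighborFinset u).card : ℝ) ≤
                ((G.neighborFinset v).card : ℝ) / (1 - 5 * ε) := by
  refine ⟨1/21, by norm_num, ?_⟩
  intro V _ _ G _ ε hε0 hε C hC hcard u hu v hv
  obtain ⟨v0, rfl⟩ := hC
  have hmem : ∀ w ∈ Finset.univ.filter (fun w => (tildeGraph G ε).Reachable v0 w),
      (tildeGraph G ε).Reachable v0 w := fun w hw => (Finset.mem_filter.mp hw).2
  have hru : (tildeGraph G ε).Reachable v0 u := hmem u hu
  have hrv : (tildeGraph G ε).Reachable v0 v := hmem v hv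
  have hnb : ∀ w ∈ Finset.univ.filter (fun w => (tildeGraph G ε).Reachable v0 w),
      ∃ x, (tildeGraph G ε).Adj w x := by
    intro w hw
    obtain ⟨z, hz, hzw⟩ := Finset.exists_mem_ne hcard w
    have hrw : (tildeGraph G ε).Reachable w z := ((hmem w hw).symm).trans (hmem z hz)
    obtain ⟨p⟩ := hrw
    cases p with
    | nil => exact absurd rfl hzw.symm
    | cons h p => exact ⟨_, h⟩
  have huv : (tildeGraph G ε).Reachable u v := hru.symm.trans hrv
  have low1 : (1 - 5 * ε) * dgr G v ≤ dgr G u :=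
    main_lower hε0 hε (hnb u hu) (hnb v hv) huv
  have low2 : (1 - 5 * ε) * dgr G u ≤ dgr G v :=
    main_lower hε0 hε (hnb v hv) (hnb u hu) huv.symm
  have h5 : (0:ℝ) < 1 - 5 * ε := by linarith
  constructor
  · exact low1
  · rw [le_div_iff₀ h5]
    unfold dgr at low2
    linarith
end

section
/- There exists a real constant ε₀ > 0 such that for every real ε with 0 < ε < ε₀, every simple graph G on a finite vertex set, every nontrivial cluster C of the agreement decomposition of G with parameter ε/10^14, and every vertex u ∈ C, it holds that (1 − ε/10^13)·|C| ≤ |N(u)| ≤ (1 + ε/10^13)·|C|. -/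
open scoped symmDiff Classical

set_option linter.unusedSectionVars false
section Aux
variable {V : Type} [Fintype V] [DecidableEq V] (G : SimpleGraph V) [DecidableRel G.Adj]

noncomputable def dd (a : V) : ℝ := ((G.neighborFinset a).card : ℝ)
noncomputable def sd (a b : V) : ℝ := (((G.neighborFinset a) ∆ (G.neighborFinset b)).card : ℝ)

variable {G}

lemma dd_nonneg (a : V) : 0 ≤ dd G a := Nat.cast_nonneg _
lemma sd_nonneg (a b : V) : 0 ≤ sd G a b := Nat.cast_nonneg _
lemma sd_comm (a b : V) : sd G a b = sd G b a := by unfold sd; rw [symmDiff_comm]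
lemma sd_self (a : V) : sd G a a = 0 := by unfold sd; simp

lemma dd_le (a b : V) : dd G a ≤ dd G b + sd G a b := by
  unfold dd sd
  have h : G.neighborFinset a ⊆ G.neighborFinset b ∪ (G.neighborFinset a ∆ G.neighborFinset b) := by
    intro x hx
    by_cases h : x ∈ G.neighborFinset b
    · exact Finset.mem_union_left _ h
    · exact Finset.mem_union_right _ (by simp [Finset.mem_symmDiff, hx, h])
  calc ((G.neighborFinset a).card : ℝ)
      ≤ ((G.neighborFinset b ∪ (G.neighborFinset a ∆ G.neighborFinset b)).card : ℝ) := by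
        exact_mod_cast Finset.card_le_card h
    _ ≤ _ := by exact_mod_cast Finset.card_union_le _ _

lemma sd_tri (a b c : V) : sd G a c ≤ sd G a b + sd G b c := by
  unfold sd
  calc ((G.neighborFinset a ∆ G.neighborFinset c).card : ℝ)
      ≤ (((G.neighborFinset a ∆ G.neighborFinset b) ∪ (G.neighborFinset b ∆ G.neighborFinset c)).card : ℝ) := by
        exact_mod_cast Finset.card_le_card (symmDiff_triangle _ _ _)
    _ ≤ _ := by exact_mod_cast Finset.card_union_le _ _

lemma agree_sd {δ : ℝ} {a b : V} (h : InAgreement G δ a b) :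
    sd G a b ≤ δ * max (dd G a) (dd G b) := by
  unfold InAgreement at h
  unfold sd dd
  have : ((max (G.neighborFinset a).card (G.neighborFinset b).card : ℕ) : ℝ)
      = max ((G.neighborFinset a).card : ℝ) ((G.neighborFinset b).card : ℝ) := by
    push_cast; ring
  rw [this] at h
  exact h.le

/-- From a symmetric-difference bound, comparability of degrees. -/
lemma deg_of_sd {t : ℝ} {a b : V} (ht0 : 0 ≤ t) (ht : t ≤ 1/4)
    (h : sd G a b ≤ t * max (dd G a) (dd G b)) :
    dd G b ≤ (1 + 2*t) * dd G a ∧ sd G a b ≤ t * (1 + 2*t) * dd G a := by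
  have ha := dd_nonneg (G := G) a
  have hb := dd_nonneg (G := G) b
  have hba := dd_le (G := G) b a
  rcases le_total (dd G b) (dd G a) with hc | hc
  · rw [max_eq_left hc] at h
    refine ⟨by nlinarith, ?_⟩
    nlinarith [mul_nonneg (mul_nonneg ht0 ht0) ha]
  · rw [max_eq_right hc] at h
    rw [sd_comm] at hba
    have h1 : dd G b * (1 - t) ≤ dd G a := by nlinarith
    refine ⟨by nlinarith, ?_⟩
    nlinarith [mul_nonneg ht0 hb, mul_nonneg (mul_nonneg ht0 ht0) hb, mul_nonneg ht0 ha]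

lemma heavy_one_le {δ : ℝ} {a : V} (h : Heavy G δ a) : 1 ≤ dd G a := by
  unfold Heavy at h
  unfold dd
  rcases Nat.eq_zero_or_pos (G.neighborFinset a).card with h0 | h0
  · exfalso
    rw [Finset.card_eq_zero] at h0
    rw [h0] at h
    simp at h
  · exact_mod_cast h0

lemma bootstrap {δ : ℝ} {a b : V} (hδ0 : 0 < δ) (hδ : δ ≤ 1/100)
    (ha : Heavy G δ a) (hb : Heavy G δ b)
    (h : sd G a b ≤ 20 * δ * max (dd G a) (dd G b)) :
    sd G a b ≤ (21/10) * δ * max (dd G a) (dd G b) := by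
  set A' := (G.neighborFinset a).filter (fun v => InAgreement G δ a v) with hA'
  set B' := (G.neighborFinset b).filter (fun v => InAgreement G δ b v) with hB'
  set M := max (dd G a) (dd G b) with hM
  have hda : dd G a ≤ M := le_max_left _ _
  have hdb : dd G b ≤ M := le_max_right _ _
  have hs0 := sd_nonneg (G := G) a b
  have hMa : M ≤ dd G a + sd G a b := by
    rcases max_cases (dd G a) (dd G b) with ⟨h1, _⟩ | ⟨h1, _⟩
    · rw [← hM] at h1; rw [h1]; linarith
    · rw [← hM] at h1; rw [h1]; rw [sd_comm]; exact dd_le b a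
  have hMb : M ≤ dd G b + sd G a b := by
    rcases max_cases (dd G a) (dd G b) with ⟨h1, _⟩ | ⟨h1, _⟩
    · rw [← hM] at h1; rw [h1]; exact dd_le a b
    · rw [← hM] at h1; rw [h1]; linarith
  have hM1 : 1 ≤ M := le_trans (heavy_one_le ha) hda
  have hHa : (1 - δ) * dd G a < (A'.card : ℝ) := ha
  have hHb : (1 - δ) * dd G b < (B'.card : ℝ) := hb
  have hcap : ((A' ∩ B').card : ℝ) + ((A' ∪ B').card : ℝ) = (A'.card : ℝ) + (B'.card : ℝ) := by
    exact_mod_cast Finset.card_inter_add_card_union A' B'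
  have hun : ((A' ∪ B').card : ℝ) ≤ dd G a + sd G a b := by
    have hsub : A' ∪ B' ⊆ G.neighborFinset a ∪ (G.neighborFinset a ∆ G.neighborFinset b) := by
      apply Finset.union_subset
      · exact (Finset.filter_subset _ _).trans Finset.subset_union_left
      · refine (Finset.filter_subset _ _).trans ?_
        intro x hx
        by_cases hxa : x ∈ G.neighborFinset a
        · exact Finset.mem_union_left _ hxa
        · exact Finset.mem_union_right _ (by simp [Finset.mem_symmDiff, hx, hxa])
    calc ((A' ∪ B').card : ℝ)
        ≤ ((G.neighborFinset a ∪ (G.neighborFinset a ∆ G.neighborFinset b)).card : ℝ) := by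
          exact_mod_cast Finset.card_le_card hsub
      _ ≤ _ := by unfold dd sd; exact_mod_cast Finset.card_union_le _ _
  have hpos : (0 : ℝ) < ((A' ∩ B').card : ℝ) := by
    nlinarith [mul_nonneg hδ0.le hs0, mul_nonneg hδ0.le (by linarith : (0:ℝ) ≤ M)]
  have hne : (A' ∩ B').Nonempty := by
    rw [← Finset.card_pos]
    exact_mod_cast hpos
  obtain ⟨x, hx⟩ := hne
  rw [Finset.mem_inter] at hx
  have hax : InAgreement G δ a x := (Finset.mem_filter.1 hx.1).2
  have hbx : InAgreement G δ b x := (Finset.mem_filter.1 hx.2).2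
  have h1 := (deg_of_sd hδ0.le (by linarith) (agree_sd hax)).2
  have h2 := (deg_of_sd hδ0.le (by linarith) (agree_sd hbx)).2
  have htri := sd_tri (G := G) a x b
  rw [sd_comm (G := G) x b] at htri
  nlinarith [mul_nonneg hδ0.le hs0, mul_nonneg hδ0.le (by linarith : (0:ℝ) ≤ M), sq_nonneg δ,
    mul_nonneg (mul_nonneg hδ0.le hδ0.le) (by linarith : (0:ℝ) ≤ M),
    mul_nonneg (mul_nonneg hδ0.le hδ0.le) (dd_nonneg (G := G) a),
    mul_nonneg (mul_nonneg hδ0.le hδ0.le) (dd_nonneg (G := G) b),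
    mul_nonneg hδ0.le (dd_nonneg (G := G) a), mul_nonneg hδ0.le (dd_nonneg (G := G) b)]

lemma sd_chain {s t : ℝ} {a x y : V} (hs0 : 0 ≤ s) (hs : s ≤ 1/20) (ht0 : 0 ≤ t) (ht : t ≤ 1/20)
    (h1 : sd G a x ≤ s * max (dd G a) (dd G x))
    (h2 : sd G x y ≤ t * max (dd G x) (dd G y)) :
    sd G a y ≤ (13/10) * (s + t) * max (dd G a) (dd G y) := by
  obtain ⟨hdx, hsx⟩ := deg_of_sd hs0 (by linarith) h1
  obtain ⟨_, hsy⟩ := deg_of_sd ht0 (by linarith) h2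
  have htri := sd_tri (G := G) a x y
  have hda := dd_nonneg (G := G) a
  have hdx0 := dd_nonneg (G := G) x
  have hmax : dd G a ≤ max (dd G a) (dd G y) := le_max_left _ _
  nlinarith [mul_nonneg hs0 hda, mul_nonneg ht0 hda, mul_nonneg (mul_nonneg hs0 hs0) hda,
    mul_nonneg (mul_nonneg ht0 ht0) hda, mul_nonneg (mul_nonneg hs0 ht0) hda,
    mul_nonneg ht0 hdx0, mul_nonneg (mul_nonneg ht0 ht0) hdx0,
    mul_nonneg (mul_nonneg (mul_nonneg ht0 ht0) hs0) hda,
    mul_nonneg (mul_nonneg (mul_nonneg ht0 hs0) hs0) hda,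
    mul_nonneg (mul_nonneg (mul_nonneg (mul_nonneg ht0 ht0) hs0) hs0) hda]

def Bnd (G : SimpleGraph V) [DecidableRel G.Adj] (δ : ℝ) (a p : V) : Prop :=
  sd G a p ≤ (21/10) * δ * max (dd G a) (dd G p)

def ClInv (G : SimpleGraph V) [DecidableRel G.Adj] (δ : ℝ) (a w : V) : Prop :=
  (Heavy G δ w ∧ Bnd G δ a w) ∨
  (¬ Heavy G δ w ∧ ∃ p, Heavy G δ p ∧ (tildeGraph G δ).Adj p w ∧ Bnd G δ a p)

lemma clStep {δ : ℝ} {a x y : V} (hδ0 : 0 < δ) (hδ : δ ≤ 1/100) (ha : Heavy G δ a)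
    (hinv : ClInv G δ a x) (hadj : (tildeGraph G δ).Adj x y) : ClInv G δ a y := by
  obtain ⟨hGxy, hagr, hhv⟩ := hadj
  by_cases hy : Heavy G δ y
  · left
    refine ⟨hy, ?_⟩
    have hxy : sd G x y ≤ δ * max (dd G x) (dd G y) := agree_sd hagr
    have hraw : sd G a y ≤ 20 * δ * max (dd G a) (dd G y) := by
      rcases hinv with ⟨hx, hbnd⟩ | ⟨hxl, p, hp, ⟨_, hpagr, _⟩, hbnd⟩
      · have := sd_chain (G := G) (by positivity : (0:ℝ) ≤ (21/10)*δ) (by linarith)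
          hδ0.le (by linarith) hbnd hxy
        have hm : 0 ≤ max (dd G a) (dd G y) := le_trans (dd_nonneg a) (le_max_left _ _)
        nlinarith
      · have hpx : sd G p x ≤ δ * max (dd G p) (dd G x) := agree_sd hpagr
        have hax := sd_chain (G := G) (by positivity : (0:ℝ) ≤ (21/10)*δ) (by linarith)
          hδ0.le (by linarith) hbnd hpx
        have := sd_chain (G := G)
          (by positivity : (0:ℝ) ≤ (13/10)*((21/10)*δ + δ)) (by nlinarith)
          hδ0.le (by linarith) hax hxy
        have hm : 0 ≤ max (dd G a) (dd G y) := le_trans (dd_nonneg a) (le_max_left _ _)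
        nlinarith
    exact bootstrap hδ0 hδ ha hy hraw
  · right
    have hx : Heavy G δ x := by tauto
    refine ⟨hy, x, hx, ⟨hGxy, hagr, Or.inl hx⟩, ?_⟩
    rcases hinv with ⟨_, hbnd⟩ | ⟨hxl, _⟩
    · exact hbnd
    · exact absurd hx hxl

lemma inv_walk {δ : ℝ} {a : V} (hδ0 : 0 < δ) (hδ : δ ≤ 1/100) (ha : Heavy G δ a) :
    ∀ {x w : V}, (tildeGraph G δ).Walk x w → ClInv G δ a x → ClInv G δ a w := by
  intro x w p
  induction p with
  | nil => exact id
  | cons hadj p ih => exact fun h => ih (clStep hδ0 hδ ha h hadj)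

lemma heavy_heavy {δ : ℝ} {a b : V} (hδ0 : 0 < δ) (hδ : δ ≤ 1/100)
    (ha : Heavy G δ a) (hb : Heavy G δ b) (hr : (tildeGraph G δ).Reachable a b) :
    sd G a b ≤ (21/10) * δ * max (dd G a) (dd G b) := by
  obtain ⟨p⟩ := hr
  have hbase : ClInv G δ a a := Or.inl ⟨ha, by
    unfold Bnd
    rw [sd_self]
    exact mul_nonneg (by positivity) (le_trans (dd_nonneg a) (le_max_left _ _))⟩
  rcases inv_walk hδ0 hδ ha p hbase with ⟨_, hbnd⟩ | ⟨hnb, _⟩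
  · exact hbnd
  · exact absurd hb hnb

lemma dd_def (a : V) : dd G a = ((G.neighborFinset a).card : ℝ) := rfl
lemma sd_def (a b : V) : sd G a b = (((G.neighborFinset a) ∆ (G.neighborFinset b)).card : ℝ) := rfl

lemma exists_adj_of_ne {H : SimpleGraph V} {x y : V} (h : H.Reachable x y) (hne : x ≠ y) :
    ∃ z, H.Adj x z := by
  obtain ⟨p⟩ := h
  cases p with
  | nil => exact absurd rfl hne
  | cons h _ => exact ⟨_, h⟩

lemma double_count (S T : Finset V) :
    ∑ w ∈ T, (S ∩ G.neighborFinset w).card = ∑ x ∈ S, (T ∩ G.neighborFinset x).card := by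
  have key : ∀ (A : Finset V) (w : V), (A ∩ G.neighborFinset w).card
      = ∑ x ∈ A, if G.Adj w x then 1 else 0 := by
    intro A w
    have hA : A ∩ G.neighborFinset w = A.filter (fun x => G.Adj w x) := by
      ext x
      simp [SimpleGraph.mem_neighborFinset]
    rw [hA, Finset.card_filter]
  simp_rw [key]
  rw [Finset.sum_comm]
  refine Finset.sum_congr rfl (fun x _ => Finset.sum_congr rfl (fun w _ => ?_))
  simp [G.adj_comm]

end Aux

lemma final_low {δ c D du : ℝ} (hδ0 : 0 < δ) (hδ : δ ≤ 1/100) (hD1 : 1 ≤ D) (hc0 : 0 ≤ c)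
    (key2 : (1 - (55/10)*δ) * c ≤ (1 + 2*δ) * D)
    (hduL : D - δ * (1 + 2*δ) * D ≤ du) : (1 - 10*δ) * c ≤ du := by
  nlinarith [mul_le_mul_of_nonneg_left key2 hδ0.le,
    mul_nonneg (mul_nonneg hδ0.le hδ0.le) hc0,
    mul_nonneg (mul_nonneg hδ0.le hδ0.le) (by linarith : (0:ℝ) ≤ D),
    mul_nonneg (mul_nonneg (mul_nonneg hδ0.le hδ0.le) hδ0.le) (by linarith : (0:ℝ) ≤ D),
    mul_nonneg hδ0.le hc0, mul_nonneg hδ0.le (by linarith : (0:ℝ) ≤ D)]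
lemma final_high {δ c D du s : ℝ} (hδ0 : 0 < δ) (hδ : δ ≤ 1/100) (hD1 : 1 ≤ D)
    (hduU : du ≤ (1 + 2*δ) * D) (hCge : s + 1 ≤ c) (hScard : (1 - δ) * D < s) :
    du ≤ (1 + 10*δ) * c := by
  nlinarith [mul_nonneg hδ0.le (by linarith : (0:ℝ) ≤ D),
    mul_nonneg (mul_nonneg hδ0.le hδ0.le) (by linarith : (0:ℝ) ≤ D)]


/-- For every nontrivial cluster `C` of the agreement decomposition with
parameter `ε/10^14` and every `u ∈ C`,
`(1 − ε/10^13)·|C| ≤ |N(u)| ≤ (1 + ε/10^13)·|C|`. -/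
theorem cluster_degree_close_to_cluster_size :
    ∃ ε₀ : ℝ, 0 < ε₀ ∧
      ∀ (V : Type) (_ : Fintype V) (_ : DecidableEq V)
        (G : SimpleGraph V) (_ : DecidableRel G.Adj) (ε : ℝ), 0 < ε → ε < ε₀ →
        ∀ C : Finset V, IsCluster G (ε / 10 ^ 14) C → 1 < C.card →
          ∀ u ∈ C,
            (1 - ε / 10 ^ 13) * (C.card : ℝ) ≤ ((G.neighborFinset u).card : ℝ) ∧
            ((G.neighborFinset u).card : ℝ) ≤ (1 + ε / 10 ^ 13) * (C.card : ℝ) := by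
  refine ⟨1/10, by norm_num, ?_⟩
  intro V _ _ G _ ε hε0 hε1 C hcl hC1 u huC
  set δ : ℝ := ε / 10 ^ 14 with hδdef
  have hδ0 : 0 < δ := by positivity
  have hδ : δ ≤ 1/100 := by rw [hδdef]; norm_num; linarith
  have h13 : ε / 10 ^ 13 = 10 * δ := by rw [hδdef]; ring
  rw [h13]
  obtain ⟨v, hC⟩ := hcl
  have hmem : ∀ w, w ∈ C ↔ (tildeGraph G δ).Reachable v w := by
    intro w; rw [hC]; simp
  -- every vertex of C has a tilde-neighbor
  have hnbr : ∀ w ∈ C, ∃ z, (tildeGraph G δ).Adj w z := by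
    intro w hw
    obtain ⟨b, hbC, hbne⟩ := Finset.exists_mem_ne hC1 w
    exact exists_adj_of_ne (((hmem w).1 hw).symm.trans ((hmem b).1 hbC)) (Ne.symm hbne)
  -- associated heavy vertex
  have hassoc : ∀ w ∈ C, ∃ h, Heavy G δ h ∧ h ∈ C ∧ sd G w h ≤ δ * max (dd G w) (dd G h) := by
    intro w hw
    by_cases hwH : Heavy G δ w
    · exact ⟨w, hwH, hw, by
        rw [sd_self]
        exact mul_nonneg hδ0.le (le_trans (dd_nonneg _) (le_max_left _ _))⟩
    · obtain ⟨z, hz⟩ := hnbr w hw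
      have hreach := hz.reachable
      obtain ⟨hG, hagr, hhv⟩ := hz
      have hzH : Heavy G δ z := by tauto
      have hzC : z ∈ C := (hmem z).2 (((hmem w).1 hw).trans hreach)
      exact ⟨z, hzH, hzC, agree_sd hagr⟩
  obtain ⟨h0, hh0, hh0C, hsdu⟩ := hassoc u huC
  have hD1 : (1:ℝ) ≤ dd G h0 := heavy_one_le hh0
  have hD0 : (0:ℝ) < dd G h0 := by linarith
  set S := (G.neighborFinset h0).filter (fun x => InAgreement G δ h0 x) with hSdef
  have hScard : (1 - δ) * dd G h0 < (S.card : ℝ) := hh0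
  have hSsubN : S ⊆ G.neighborFinset h0 := Finset.filter_subset _ _
  have hSD : (S.card : ℝ) ≤ dd G h0 := by
    rw [dd_def]; exact_mod_cast Finset.card_le_card hSsubN
  have hSx : ∀ x ∈ S, dd G x ≤ (1 + 2*δ) * dd G h0 := by
    intro x hx
    exact (deg_of_sd hδ0.le (by linarith) (agree_sd (Finset.mem_filter.1 hx).2)).1
  have hSsubC : S ⊆ C := by
    intro x hx
    have hagr := (Finset.mem_filter.1 hx).2
    have hadjN : G.Adj h0 x := by
      have := (Finset.mem_filter.1 hx).1
      rwa [SimpleGraph.mem_neighborFinset] at this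
    have hadj : (tildeGraph G δ).Adj h0 x := ⟨hadjN, hagr, Or.inl hh0⟩
    exact (hmem x).2 (((hmem h0).1 hh0C).trans hadj.reachable)
  have hCge : (S.card : ℝ) + 1 ≤ (C.card : ℝ) := by
    have hnm : h0 ∉ S := fun h =>
      G.loopless.irrefl h0 (by
        have := hSsubN h
        rwa [SimpleGraph.mem_neighborFinset] at this)
    have hcard : S.card + 1 ≤ C.card := by
      have := Finset.card_le_card (Finset.insert_subset hh0C hSsubC)
      rwa [Finset.card_insert_of_notMem hnm] at this
    exact_mod_cast hcard
  -- per-vertex lower bound on |S ∩ N(w)|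
  have hperw : ∀ w ∈ C, (1 - (55/10)*δ) * dd G h0 ≤ ((S ∩ G.neighborFinset w).card : ℝ) := by
    intro w hw
    obtain ⟨q, hqH, hqC, hsdwq⟩ := hassoc w hw
    have hreach : (tildeGraph G δ).Reachable q h0 :=
      ((hmem q).1 hqC).symm.trans ((hmem h0).1 hh0C)
    have hqh0 := heavy_heavy hδ0 hδ hqH hh0 hreach
    have hchain := sd_chain (G := G) hδ0.le (by linarith)
      (by positivity : (0:ℝ) ≤ (21/10)*δ) (by linarith) hsdwq hqh0
    have hcomm : sd G h0 w ≤ ((13/10)*(δ + (21/10)*δ)) * max (dd G h0) (dd G w) := by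
      rw [sd_comm, max_comm]; exact hchain
    obtain ⟨hdw, hsdhw⟩ := deg_of_sd (by positivity) (by linarith) hcomm
    have f1 : ((G.neighborFinset h0 ∩ G.neighborFinset w).card : ℝ)
        ≤ ((S ∩ G.neighborFinset w).card : ℝ) + ((G.neighborFinset h0 \ S).card : ℝ) := by
      have hsub : G.neighborFinset h0 ∩ G.neighborFinset w
          ⊆ (S ∩ G.neighborFinset w) ∪ (G.neighborFinset h0 \ S) := by
        intro x hx
        rw [Finset.mem_inter] at hx
        by_cases hxS : x ∈ S
        · exact Finset.mem_union_left _ (Finset.mem_inter.2 ⟨hxS, hx.2⟩)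
        · exact Finset.mem_union_right _ (Finset.mem_sdiff.2 ⟨hx.1, hxS⟩)
      have := le_trans (Finset.card_le_card hsub) (Finset.card_union_le _ _)
      exact_mod_cast this
    have f2 : ((G.neighborFinset h0 \ S).card : ℝ) = dd G h0 - (S.card : ℝ) := by
      rw [Finset.card_sdiff_of_subset hSsubN, dd_def, Nat.cast_sub (Finset.card_le_card hSsubN)]
    have f3 : dd G h0 - sd G h0 w ≤ ((G.neighborFinset h0 ∩ G.neighborFinset w).card : ℝ) := by
      have hsub : G.neighborFinset h0
          ⊆ (G.neighborFinset h0 ∩ G.neighborFinset w) ∪ (G.neighborFinset h0 ∆ G.neighborFinset w) := by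
        intro x hx
        by_cases hxw : x ∈ G.neighborFinset w
        · exact Finset.mem_union_left _ (Finset.mem_inter.2 ⟨hx, hxw⟩)
        · exact Finset.mem_union_right _ (by simp [Finset.mem_symmDiff, hx, hxw])
      have hcard := le_trans (Finset.card_le_card hsub) (Finset.card_union_le _ _)
      rw [dd_def, sd_def]
      have hcast : ((G.neighborFinset h0).card : ℝ)
          ≤ ((G.neighborFinset h0 ∩ G.neighborFinset w).card : ℝ)
            + ((G.neighborFinset h0 ∆ G.neighborFinset w).card : ℝ) := by
        exact_mod_cast hcard
      linarith
    nlinarith [mul_nonneg (mul_nonneg hδ0.le hδ0.le) hD0.le,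
      mul_nonneg hδ0.le hD0.le, sd_nonneg (G := G) h0 w]
  -- sum bounds
  have hc0 : (0:ℝ) ≤ (C.card : ℝ) := Nat.cast_nonneg _
  have hsum1 : ((1 - (55/10)*δ) * dd G h0) * (C.card : ℝ)
      ≤ ∑ w ∈ C, ((S ∩ G.neighborFinset w).card : ℝ) := by
    have := Finset.sum_le_sum hperw
    rw [Finset.sum_const] at this
    rw [mul_comm]
    simpa [nsmul_eq_mul] using this
  have hsum2 : ∑ w ∈ C, ((S ∩ G.neighborFinset w).card : ℝ)
      = ∑ x ∈ S, ((C ∩ G.neighborFinset x).card : ℝ) := by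
    rw [← Nat.cast_sum, ← Nat.cast_sum, double_count (G := G) S C]
  have hsum3 : ∑ x ∈ S, ((C ∩ G.neighborFinset x).card : ℝ) ≤ ∑ x ∈ S, dd G x :=
    Finset.sum_le_sum (fun x _ => by
      rw [dd_def]
      exact Nat.cast_le.2 (Finset.card_le_card Finset.inter_subset_right))
  have hsum4 : ∑ x ∈ S, dd G x ≤ (S.card : ℝ) * ((1 + 2*δ) * dd G h0) := by
    have := Finset.sum_le_sum hSx
    rw [Finset.sum_const] at this
    simpa [nsmul_eq_mul] using this
  have key2 : (1 - (55/10)*δ) * (C.card : ℝ) ≤ (1 + 2*δ) * dd G h0 := by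
    have hbig : ((1 - (55/10)*δ) * (C.card : ℝ)) * dd G h0
        ≤ ((1 + 2*δ) * dd G h0) * dd G h0 := by
      nlinarith [mul_nonneg hδ0.le hD0.le]
    exact le_of_mul_le_mul_right hbig hD0
  -- degree of u vs degree of h0
  have hu2 : sd G h0 u ≤ δ * max (dd G h0) (dd G u) := by
    rw [sd_comm, max_comm]; exact hsdu
  obtain ⟨hduU, hsdU⟩ := deg_of_sd hδ0.le (by linarith) hu2
  have hduL : dd G h0 - δ * (1 + 2*δ) * dd G h0 ≤ dd G u := by
    have := dd_le (G := G) h0 u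
    linarith
  rw [← dd_def (G := G) u]
  exact ⟨final_low hδ0 hδ hD1 hc0 key2 hduL, final_high hδ0 hδ hD1 hduU hCge hScard⟩
end
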